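/- Define B(q) = (q;q)_∞^{2/5}/((q;q⁵)_∞ (q⁴;q⁵)_∞) formally via the Rogers–Ramanujan identity: the q-series ∑_{n≥0} q^{n²}/(q;q)ₙ equals 1/((q;q⁵)_∞(q⁴;q⁵)_∞) as formal power series in q. -/

import Mathlib

open PowerSeries Finset

/-- The infinite product `(q^a; q^b)_∞ = ∏_{k≥0} (1 - q^{a+bk})` as a formal power series:
its `n`-th coefficient agrees with that of the (stabilized) finite partial product. -/
noncomputable def qPochhammer (R : Type*) [CommRing R] (a b : ℕ) : PowerSeries R :=
  PowerSeries.mk fun n =>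
    PowerSeries.coeff n (∏ k ∈ Finset.range (n + 1), (1 - (X : PowerSeries R) ^ (a + b * k)))

/-- The finite product `(q;q)ₙ = ∏_{k=1}^{n} (1 - qᵏ)`. -/
noncomputable def qPochFin (n : ℕ) : PowerSeries ℚ :=
  ∏ k ∈ Finset.range n, (1 - (X : PowerSeries ℚ) ^ (k + 1))

noncomputable section RR

/-- sign `(-1)^j` for `j : ℤ`. -/
def sg (j : ℤ) : ℚ := if Even j then 1 else -1

lemma sg_neg (j : ℤ) : sg (-j) = sg j := by simp [sg]

lemma sg_sub_one (j : ℤ) : sg (j - 1) = - sg j := by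
  simp only [sg, Int.even_sub_one]
  by_cases h : Even j <;> simp [h]

lemma sg_add_one (j : ℤ) : sg (j + 1) = - sg j := by
  have := sg_sub_one (j + 1); simp at this; rw [this]; ring

lemma sg_neg_one_sub (j : ℤ) : sg (-1 - j) = - sg j := by
  have : (-1 - j) = -(j + 1) := by ring
  rw [this, sg_neg, sg_add_one]

/-- finite q-Pochhammer `∏_{k=1}^{m} (1 - X^{b k})`. -/
def pb (b m : ℕ) : PowerSeries ℚ := ∏ k ∈ range m, (1 - (X : PowerSeries ℚ) ^ (b * (k + 1)))

/-- Gaussian binomial coefficient (base `q^b`) as a power series, with `ℤ` lower index,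
  vanishing out of range; defined via the q-Pascal recursion. -/
def gb (b : ℕ) : ℕ → ℤ → PowerSeries ℚ
  | 0, K => if K = 0 then 1 else 0
  | (N+1), K => gb b N (K-1) + (X : PowerSeries ℚ) ^ (b * K.toNat) * gb b N K

lemma gb_pascal1 (b N : ℕ) (K : ℤ) :
    gb b (N+1) K = gb b N (K-1) + (X : PowerSeries ℚ) ^ (b * K.toNat) * gb b N K := rfl

lemma gb_neg (b N : ℕ) : ∀ (K : ℤ), K < 0 → gb b N K = 0 := by
  induction N with
  | zero => intro K h; simp [gb]; omega
  | succ N ih => intro K h; rw [gb_pascal1, ih _ (by omega), ih _ h]; simp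

lemma gb_gt (b N : ℕ) : ∀ (K : ℤ), (N : ℤ) < K → gb b N K = 0 := by
  induction N with
  | zero => intro K h; simp [gb]; omega
  | succ N ih => intro K h; rw [gb_pascal1, ih _ (by push_cast at h ⊢; omega), ih _ (by push_cast at h ⊢; omega)]; simp

lemma gb_zero (b N : ℕ) : gb b N 0 = 1 := by
  induction N with
  | zero => simp [gb]
  | succ N ih => rw [gb_pascal1, gb_neg b N _ (by omega), ih]; simp

lemma gb_diag (b N : ℕ) : gb b N (N : ℤ) = 1 := by
  induction N with
  | zero => simp [gb]
  | succ N ih =>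
      push_cast
      rw [gb_pascal1, gb_gt b N ((N:ℤ)+1) (by omega)]
      have : ((N : ℤ) + 1) - 1 = (N : ℤ) := by ring
      rw [this, ih]; simp

/-- the key auxiliary identity `(1 - q^{b(N+1-K)}) [N, K-1] = (1 - q^{bK}) [N, K]`. -/
lemma gb_aux (b N : ℕ) : ∀ (K : ℤ),
    (1 - (X:PowerSeries ℚ) ^ (b * ((N:ℤ) + 1 - K).toNat)) * gb b N (K - 1)
      = (1 - (X:PowerSeries ℚ) ^ (b * K.toNat)) * gb b N K := by
  induction N with
  | zero =>
      intro K
      rcases eq_or_ne K 0 with rfl | h0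
      · simp [gb]
      rcases eq_or_ne K 1 with rfl | h1
      · simp [gb]
      · have h2 : ¬(K - 1 = 0) := by omega
        simp [gb, h0, h2]
  | succ N ih =>
      intro K
      by_cases hk0 : K ≤ 0
      · rw [gb_neg b (N+1) (K-1) (by omega)]
        rcases eq_or_ne K 0 with rfl | h0
        · simp
        · rw [gb_neg b (N+1) K (by omega)]; simp
      by_cases hkN : (N : ℤ) + 2 ≤ K
      · rw [gb_gt b (N+1) K (by push_cast; omega)]
        have h1 : (((N+1:ℕ):ℤ) + 1 - K).toNat = 0 := by push_cast; omega
        rw [h1]; simp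
      -- main case 1 ≤ K ≤ N+1
      obtain ⟨k, rfl⟩ : ∃ k : ℕ, K = (k : ℤ) + 1 := ⟨(K-1).toNat, by omega⟩
      have hkn : k ≤ N := by omega
      have ih1 := ih ((k:ℤ))
      have ih2 := ih ((k:ℤ) + 1)
      rw [gb_pascal1, gb_pascal1]
      have e1 : ((k:ℤ) + 1 - 1) = (k:ℤ) := by ring
      rw [e1] at ih2 ⊢
      have t1 : ((N:ℤ) + 1 - (k:ℤ)).toNat = N + 1 - k := by omega
      have t2 : ((N:ℤ) + 1 - ((k:ℤ)+1)).toNat = N - k := by omega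
      have t3 : (((N+1:ℕ):ℤ) + 1 - ((k:ℤ)+1)).toNat = N + 1 - k := by push_cast; omega
      have t4 : ((k:ℤ)).toNat = k := by omega
      have t5 : ((k:ℤ)+1).toNat = k + 1 := by omega
      rw [t3, t5, t4]
      rw [t1, t4] at ih1
      rw [t2, t5] at ih2
      have p1 : (X:PowerSeries ℚ) ^ (b*(N+1-k)) = X ^ (b*(N-k)) * X^b := by
        rw [← pow_add]; congr 1
        have h : N + 1 - k = (N - k) + 1 := by omega
        rw [h, Nat.mul_succ]
      have p2 : (X:PowerSeries ℚ) ^ (b*(k+1)) = X ^ (b*k) * X^b := by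
        rw [← pow_add, Nat.mul_succ]
      rw [p1] at ih1 ⊢
      rw [p2] at ih2 ⊢
      linear_combination ih1 + (X:PowerSeries ℚ)^(b*k) * (X:PowerSeries ℚ)^b * ih2


lemma gb_symm (b N : ℕ) : ∀ (K : ℤ), gb b N ((N:ℤ) - K) = gb b N K := by
  induction N with
  | zero =>
      intro K
      rcases eq_or_ne K 0 with rfl | h0
      · simp
      · have h1 : ¬((0:ℤ) - K = 0) := by omega
        simp [gb, h0, h1]
  | succ N ih =>
      intro K
      have hc : ((N+1:ℕ):ℤ) - K = ((N:ℤ) + 1 - K) := by push_cast; ring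
      rw [hc, gb_pascal1, gb_pascal1]
      have e1 : (N:ℤ) + 1 - K - 1 = (N:ℤ) - K := by ring
      have e2 : (N:ℤ) + 1 - K = (N:ℤ) - (K - 1) := by ring
      rw [e1, ih K]
      rw [show gb b N ((N:ℤ) + 1 - K) = gb b N (K - 1) by rw [e2, ih (K-1)]]
      have := gb_aux b N K
      linear_combination -this

lemma gb_pascal2 (b N : ℕ) (K : ℤ) :
    gb b (N+1) K = (X : PowerSeries ℚ) ^ (b * (((N:ℤ)+1) - K).toNat) * gb b N (K-1) + gb b N K := by
  have h := gb_pascal1 b N (((N+1:ℕ):ℤ) - K)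
  rw [gb_symm b (N+1) K] at h
  rw [h]
  have hc : ((N+1:ℕ):ℤ) - K = ((N:ℤ) + 1 - K) := by push_cast; ring
  rw [hc]
  have e1 : (N:ℤ) + 1 - K - 1 = (N:ℤ) - K := by ring
  have e2 : (N:ℤ) + 1 - K = (N:ℤ) - (K - 1) := by ring
  rw [e1, gb_symm b N K, show gb b N ((N:ℤ)+1-K) = gb b N (K-1) by rw [e2, gb_symm b N (K-1)]]
  ring


lemma pb_succ (b m : ℕ) : pb b (m+1) = pb b m * (1 - (X : PowerSeries ℚ)^(b*(m+1))) := by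
  rw [pb, prod_range_succ]; rfl

lemma gb_mul_pb (b : ℕ) : ∀ N K : ℕ, K ≤ N →
    gb b N (K : ℤ) * pb b K * pb b (N - K) = pb b N := by
  intro N
  induction N with
  | zero => intro K hK; interval_cases K; simp [gb, pb]
  | succ N ih =>
      intro K hK
      rcases Nat.eq_zero_or_pos K with rfl | hK0
      · simp [gb_zero, pb]
      obtain ⟨k, rfl⟩ : ∃ k, K = k + 1 := ⟨K - 1, by omega⟩
      have hkN : k ≤ N := by omega
      rw [gb_pascal1]
      have e0 : ((k+1:ℕ):ℤ) - 1 = (k:ℤ) := by push_cast; ring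
      have e1 : ((k+1:ℕ):ℤ).toNat = k+1 := by omega
      rw [e0, e1]
      have hsub : N + 1 - (k+1) = N - k := by omega
      rw [hsub, add_mul, add_mul]
      rw [show gb b N (k:ℤ) * pb b (k+1) * pb b (N-k)
            = (1 - X^(b*(k+1))) * (gb b N (k:ℤ) * pb b k * pb b (N-k)) by rw [pb_succ]; ring]
      rw [ih k hkN]
      have hN1 : pb b (N+1) = pb b N * (1 - X^(b*(N+1))) := pb_succ b N
      rw [hN1]
      rcases Nat.lt_or_ge N (k+1) with hNk | hNk
      · -- K = N+1, second term has gb b N (N+1) = 0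
        obtain rfl : k = N := by omega
        push_cast
        rw [gb_gt b k ((k:ℤ)+1) (by omega)]
        have h2 : k - k = 0 := by omega
        rw [h2]
        simp only [pb, range_zero, prod_empty]
        ring
      · -- k+1 ≤ N
        have hp : pb b (N-k) = pb b (N-(k+1)) * (1 - X^(b*(N-k))) := by
          have h3 : N - k = (N-(k+1)) + 1 := by omega
          rw [h3, pb_succ, ← h3]
        rw [hp]
        have ih2 := ih (k+1) hNk
        push_cast at ih2
        have hAB : (X:PowerSeries ℚ)^(b*(k+1)) * X^(b*(N-k)) = X^(b*(N+1)) := by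
          rw [← pow_add]
          congr 1
          have h7 : (k+1) + (N-k) = N+1 := by omega
          rw [← h7]; ring
        push_cast
        linear_combination (X:PowerSeries ℚ)^(b*(k+1)) * (1 - X^(b*(N-k))) * ih2
          + (-(pb b N)) * hAB


section SumHelpers

variable {M : Type*} [AddCommMonoid M]

lemma sum_shift (h : ℤ → M) (a b c : ℤ) :
    ∑ j ∈ Icc a b, h j = ∑ j ∈ Icc (a+c) (b+c), h (j - c) := by
  apply Finset.sum_nbij' (fun j => j + c) (fun j => j - c) <;> intros <;> simp_all <;> omega

lemma sum_reflect (h : ℤ → M) (a b : ℤ) :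
    ∑ j ∈ Icc a b, h j = ∑ j ∈ Icc (-b) (-a), h (-j) := by
  apply Finset.sum_nbij' (fun j => -j) (fun j => -j) <;> intros <;> simp_all <;> omega

lemma sum_window (h : ℤ → M) {a b a' b' : ℤ} (h1 : a' ≤ a) (h2 : b ≤ b')
    (hz : ∀ j, ¬(a ≤ j ∧ j ≤ b) → h j = 0) :
    ∑ j ∈ Icc a' b', h j = ∑ j ∈ Icc a b, h j := by
  refine (Finset.sum_subset (Finset.Icc_subset_Icc h1 h2) fun x hx hx' => ?_).symm
  simp only [Finset.mem_Icc] at hx hx'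
  exact hz x (by omega)

end SumHelpers

section Exponents

/-- triangular number `j(j+1)/2`. -/
def Tg (j : ℤ) : ℤ := (j * (j + 1)) / 2

lemma twoTg (j : ℤ) : 2 * Tg j = j^2 + j := by
  obtain ⟨t, ht⟩ : ∃ t, j * (j + 1) = 2 * t := by
    rcases Int.even_or_odd j with ⟨m, rfl⟩ | ⟨m, rfl⟩
    · exact ⟨m * (m + m + 1), by ring⟩
    · exact ⟨(2*m+1) * (m + 1), by ring⟩
  rw [Tg, ht, Int.mul_ediv_cancel_left _ (by norm_num)]
  linarith [ht]

lemma Tg_nonneg (j : ℤ) : 0 ≤ Tg j := by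
  have h := twoTg j
  have h2 : 0 ≤ j^2 + j := by
    rcases le_or_gt 0 j with h3 | h3
    · positivity
    · nlinarith
  linarith

/-- `E j = j(5j+1)/2`, the pentagonal-type exponent. -/
def Ee (j : ℤ) : ℤ := 2 * j^2 + Tg j

lemma twoEe (j : ℤ) : 2 * Ee j = 5 * j^2 + j := by
  have := twoTg j; rw [Ee]; linarith

lemma Ee_nonneg (j : ℤ) : 0 ≤ Ee j := by
  have := Tg_nonneg j; have := sq_nonneg j; rw [Ee]; linarith

/-- `F j = j(5j+3)/2`. -/
def Fe (j : ℤ) : ℤ := Ee j + j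

lemma twoFe (j : ℤ) : 2 * Fe j = 5 * j^2 + 3 * j := by
  have := twoEe j; rw [Fe]; linarith

lemma Fe_nonneg (j : ℤ) : 0 ≤ Fe j := by
  have h := twoFe j
  have h2 : 0 ≤ 5*j^2 + 3*j := by
    rcases le_or_gt 0 j with h3 | h3
    · positivity
    · nlinarith
  linarith

lemma Ee_neg (j : ℤ) : Ee (-j) = Ee j - j := by
  have h1 := twoEe j; have h2 := twoEe (-j); nlinarith [h1, h2]

lemma Fe_neg (j : ℤ) : Fe (-j) = Ee j - 2*j := by
  rw [Fe, Ee_neg]; ring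

lemma Ee_sub_one (j : ℤ) : Ee (j - 1) = Ee j - 5*j + 2 := by
  have h1 := twoEe j; have h2 := twoEe (j-1); nlinarith [h1, h2]

lemma Ee_add_one (j : ℤ) : Ee (j + 1) = Ee j + 5*j + 3 := by
  have h1 := twoEe j; have h2 := twoEe (j+1); nlinarith [h1, h2]

lemma Ee_neg_one_sub (j : ℤ) : Ee (-1 - j) = Ee j + 4*j + 2 := by
  have h : -1 - j = -(j+1) := by ring
  rw [h, Ee_neg, Ee_add_one]; ring

lemma Fe_neg_one_sub (j : ℤ) : Fe (-1 - j) = Ee j + 3*j + 1 := by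
  rw [Fe, Ee_neg_one_sub]; ring

lemma Ee_zero : Ee 0 = 0 := by have := twoEe 0; linarith
lemma Fe_zero : Fe 0 = 0 := by rw [Fe, Ee_zero]; ring

end Exponents


section Fermionic

/-- `Sq i n = ∑_k X^{k²+ik} [n,k]_q`. -/
def Sq (i n : ℕ) : PowerSeries ℚ :=
  ∑ k ∈ range (n+1), (X:PowerSeries ℚ)^(k*k + i*k) * gb 1 n (k:ℤ)

lemma Sq_zero (i : ℕ) : Sq i 0 = 1 := by
  simp [Sq, gb]

lemma Sq_ascent (i n : ℕ) : Sq i (n+1) = Sq i n + X^(n+1+i) * Sq (i+1) n := by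
  unfold Sq
  have step : ∀ k ∈ range (n+2), (X:PowerSeries ℚ)^(k*k+i*k) * gb 1 (n+1) (k:ℤ)
      = ((X:PowerSeries ℚ)^(k*k+i*k+(n+1-k)) * gb 1 n ((k:ℤ)-1))
        + (X:PowerSeries ℚ)^(k*k+i*k) * gb 1 n (k:ℤ) := by
    intro k hk
    simp only [mem_range] at hk
    rw [gb_pascal2]
    have h1 : (1 * (((n:ℤ)+1) - (k:ℤ)).toNat) = n+1-k := by omega
    rw [h1, mul_add, ← mul_assoc, ← pow_add]
  rw [Finset.sum_congr rfl step, Finset.sum_add_distrib]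
  have h2 : (∑ k ∈ range (n+2), (X:PowerSeries ℚ)^(k*k+i*k) * gb 1 n (k:ℤ))
      = ∑ k ∈ range (n+1), (X:PowerSeries ℚ)^(k*k+i*k) * gb 1 n (k:ℤ) := by
    rw [Finset.sum_range_succ, gb_gt 1 n ((n+1:ℕ):ℤ) (by push_cast; omega)]
    simp
  have h1 : (∑ k ∈ range (n+2), (X:PowerSeries ℚ)^(k*k+i*k+(n+1-k)) * gb 1 n ((k:ℤ)-1))
      = X^(n+1+i) * ∑ k ∈ range (n+1), (X:PowerSeries ℚ)^(k*k+(i+1)*k) * gb 1 n (k:ℤ) := by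
    rw [Finset.sum_range_succ']
    have hz : (X:PowerSeries ℚ)^(0*0+i*0+(n+1-0)) * gb 1 n (((0:ℕ):ℤ)-1) = 0 := by
      rw [gb_neg 1 n _ (by omega)]; ring
    rw [hz, add_zero, Finset.mul_sum]
    apply Finset.sum_congr rfl
    intro k hk
    simp only [mem_range] at hk
    have hc : (((k+1:ℕ)):ℤ) - 1 = (k:ℤ) := by push_cast; ring
    rw [hc, ← mul_assoc, ← pow_add]
    congr 1
    have hnk : n + 1 - (k+1) = n - k := by omega
    rw [hnk]
    obtain ⟨m, rfl⟩ : ∃ m, n = k + m := ⟨n - k, by omega⟩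
    have hm : k + m - k = m := by omega
    rw [hm]; ring
  rw [h1, h2]
  ring

lemma Sq_descent (i n : ℕ) : Sq i (n+1) = Sq (i+1) n + X^(i+1) * Sq (i+2) n := by
  unfold Sq
  have step : ∀ k ∈ range (n+2), (X:PowerSeries ℚ)^(k*k+i*k) * gb 1 (n+1) (k:ℤ)
      = ((X:PowerSeries ℚ)^(k*k+i*k) * gb 1 n ((k:ℤ)-1))
        + (X:PowerSeries ℚ)^(k*k+(i+1)*k) * gb 1 n (k:ℤ) := by
    intro k hk
    rw [gb_pascal1]
    have h1 : (1 * ((k:ℤ)).toNat) = k := by omega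
    rw [h1, mul_add, ← mul_assoc, ← pow_add]
    congr 2
    ring
  rw [Finset.sum_congr rfl step, Finset.sum_add_distrib]
  have h2 : (∑ k ∈ range (n+2), (X:PowerSeries ℚ)^(k*k+(i+1)*k) * gb 1 n (k:ℤ))
      = ∑ k ∈ range (n+1), (X:PowerSeries ℚ)^(k*k+(i+1)*k) * gb 1 n (k:ℤ) := by
    rw [Finset.sum_range_succ, gb_gt 1 n ((n+1:ℕ):ℤ) (by push_cast; omega)]
    simp
  have h1 : (∑ k ∈ range (n+2), (X:PowerSeries ℚ)^(k*k+i*k) * gb 1 n ((k:ℤ)-1))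
      = X^(i+1) * ∑ k ∈ range (n+1), (X:PowerSeries ℚ)^(k*k+(i+2)*k) * gb 1 n (k:ℤ) := by
    rw [Finset.sum_range_succ']
    have hz : (X:PowerSeries ℚ)^(0*0+i*0) * gb 1 n (((0:ℕ):ℤ)-1) = 0 := by
      rw [gb_neg 1 n _ (by omega)]; ring
    rw [hz, add_zero, Finset.mul_sum]
    apply Finset.sum_congr rfl
    intro k hk
    have hc : (((k+1:ℕ)):ℤ) - 1 = (k:ℤ) := by push_cast; ring
    rw [hc, ← mul_assoc, ← pow_add]
    congr 1
    ring
  rw [h1, h2]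
  ring

lemma Sq_rec2 (n : ℕ) :
    Sq 1 (n+1) = X^(n+1) * Sq 0 (n+1) + Sq 1 n - X^(n+1) * Sq 1 n := by
  have hA1 := Sq_ascent 1 n
  have hB0 := Sq_descent 0 n
  have h01 : (0:ℕ)+1 = 1 := rfl
  have h02 : (0:ℕ)+2 = 2 := rfl
  rw [h01, h02] at hB0
  linear_combination hA1 - X^(n+1) * hB0

end Fermionic


section Bosonic

/-- `T_n = ∑_j (-1)^j q^{j(5j+1)/2} [2n, n+2j]`. -/
def Tt (n : ℕ) : PowerSeries ℚ :=
  ∑ j ∈ Icc (-(n:ℤ)-2) ((n:ℤ)+2),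
    C (sg j) * ((X:PowerSeries ℚ)^((Ee j).toNat) * gb 1 (2*n) ((n:ℤ) + 2*j))

/-- `V_n = ∑_j (-1)^j q^{j(5j+3)/2} [2n+1, n+1+2j]`. -/
def Vv (n : ℕ) : PowerSeries ℚ :=
  ∑ j ∈ Icc (-(n:ℤ)-2) ((n:ℤ)+2),
    C (sg j) * ((X:PowerSeries ℚ)^((Fe j).toNat) * gb 1 (2*n+1) ((n:ℤ) + 1 + 2*j))

/-- `M_n = ∑_j (-1)^j q^{j(5j+1)/2} [2n+1, n+1+2j]`. -/
def Mm (n : ℕ) : PowerSeries ℚ :=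
  ∑ j ∈ Icc (-(n:ℤ)-2) ((n:ℤ)+2),
    C (sg j) * ((X:PowerSeries ℚ)^((Ee j).toNat) * gb 1 (2*n+1) ((n:ℤ) + 1 + 2*j))

lemma cast2n (n : ℕ) : ((2*n : ℕ) : ℤ) = 2*(n:ℤ) := by push_cast; ring
lemma cast2n1 (n : ℕ) : ((2*n+1 : ℕ) : ℤ) = 2*(n:ℤ)+1 := by push_cast; ring
lemma cast2n2 (n : ℕ) : ((2*n+2 : ℕ) : ℤ) = 2*(n:ℤ)+2 := by push_cast; ring
lemma cast2n3 (n : ℕ) : ((2*n+3 : ℕ) : ℤ) = 2*(n:ℤ)+3 := by push_cast; ring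

lemma gb_out (b N : ℕ) (K : ℤ) (h : K < 0 ∨ (N:ℤ) < K) : gb b N K = 0 := by
  rcases h with h | h
  · exact gb_neg b N K h
  · exact gb_gt b N K h

lemma Mm_eq_Tt (n : ℕ) : Mm n = Tt n := by
  unfold Mm Tt
  have step : ∀ j ∈ Icc (-(n:ℤ)-2) ((n:ℤ)+2),
      C (sg j) * ((X:PowerSeries ℚ)^((Ee j).toNat) * gb 1 (2*n+1) ((n:ℤ)+1+2*j))
      = C (sg j) * ((X:PowerSeries ℚ)^((Ee j).toNat) * gb 1 (2*n) ((n:ℤ)+2*j))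
        + C (sg j) * ((X:PowerSeries ℚ)^((Ee j).toNat + ((n:ℤ)+1+2*j).toNat)
            * gb 1 (2*n) ((n:ℤ)+1+2*j)) := by
    intro j hj
    have hp := gb_pascal1 1 (2*n) ((n:ℤ)+1+2*j)
    have e1 : ((n:ℤ)+1+2*j) - 1 = (n:ℤ)+2*j := by ring
    rw [e1, one_mul] at hp
    rw [hp, pow_add]
    ring
  rw [Finset.sum_congr rfl step, Finset.sum_add_distrib]
  have hz : (∑ j ∈ Icc (-(n:ℤ)-2) ((n:ℤ)+2),
      C (sg j) * ((X:PowerSeries ℚ)^((Ee j).toNat + ((n:ℤ)+1+2*j).toNat)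
        * gb 1 (2*n) ((n:ℤ)+1+2*j))) = 0 := by
    rw [sum_window _ (le_refl (-(n:ℤ)-2)) (show (n:ℤ)+1 ≤ (n:ℤ)+2 by omega)
      (fun j hj => by
        rw [gb_out 1 (2*n) _ (by rw [cast2n]; omega)]
        ring)]
    refine Finset.sum_involution (fun j _ => -1 - j) (fun j hj => ?_)
      (fun j hj _ => by show -1 - j ≠ j; omega)
      (fun j hj => by simp only [mem_Icc] at hj ⊢; omega)
      (fun j hj => by show -1 - (-1 - j) = j; omega)
    · 
      simp only [mem_Icc] at hj
      have hsg := sg_neg_one_sub j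
      have hEE := Ee_neg_one_sub j
      have hE1 := Ee_nonneg j
      have hE2 := Ee_nonneg (-1-j)
      have key : (X:PowerSeries ℚ)^((Ee (-1-j)).toNat + ((n:ℤ)+1+2*(-1-j)).toNat)
          * gb 1 (2*n) ((n:ℤ)+1+2*(-1-j))
          = (X:PowerSeries ℚ)^((Ee j).toNat + ((n:ℤ)+1+2*j).toNat)
            * gb 1 (2*n) ((n:ℤ)+1+2*j) := by
        by_cases hr : 0 ≤ (n:ℤ)+1+2*j ∧ (n:ℤ)+1+2*j ≤ 2*(n:ℤ)
        · have hgb : gb 1 (2*n) ((n:ℤ)+1+2*(-1-j)) = gb 1 (2*n) ((n:ℤ)+1+2*j) := by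
            have := gb_symm 1 (2*n) ((n:ℤ)+1+2*j)
            rw [cast2n] at this
            rw [show (n:ℤ)+1+2*(-1-j) = 2*(n:ℤ) - ((n:ℤ)+1+2*j) by ring]
            exact this
          have he : (Ee (-1-j)).toNat + ((n:ℤ)+1+2*(-1-j)).toNat
              = (Ee j).toNat + ((n:ℤ)+1+2*j).toNat := by omega
          rw [hgb, he]
        · rw [gb_out 1 (2*n) ((n:ℤ)+1+2*(-1-j)) (by rw [cast2n]; omega),
              gb_out 1 (2*n) ((n:ℤ)+1+2*j) (by rw [cast2n]; omega)]
          ring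
      rw [key, hsg, map_neg]
      ring
  rw [hz, add_zero]

lemma Fe_def (j : ℤ) : Fe j = Ee j + j := rfl

lemma Tt_succ (n : ℕ) : Tt (n+1) = X^(n+1) * Vv n + Mm n := by
  unfold Tt Vv Mm
  simp only [Nat.cast_add, Nat.cast_one, show 2*(n+1) = 2*n+1+1 from by ring]
  have hw1 : (-((n:ℤ)+1)-2) = -(n:ℤ)-3 := by ring
  have hw2 : (((n:ℤ)+1)+2) = (n:ℤ)+3 := by ring
  rw [hw1, hw2]
  have step : ∀ j ∈ Icc (-(n:ℤ)-3) ((n:ℤ)+3),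
      C (sg j) * ((X:PowerSeries ℚ)^((Ee j).toNat) * gb 1 (2*n+1+1) ((n:ℤ)+1+2*j))
      = C (sg j) * ((X:PowerSeries ℚ)^((Ee j).toNat + ((n:ℤ)+1-2*j).toNat)
            * gb 1 (2*n+1) ((n:ℤ)+2*j))
        + C (sg j) * ((X:PowerSeries ℚ)^((Ee j).toNat) * gb 1 (2*n+1) ((n:ℤ)+1+2*j)) := by
    intro j hj
    have hp := gb_pascal2 1 (2*n+1) ((n:ℤ)+1+2*j)
    have e0 : (((2*n+1:ℕ):ℤ)+1) - ((n:ℤ)+1+2*j) = (n:ℤ)+1-2*j := by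
      rw [cast2n1]; ring
    rw [e0, one_mul] at hp
    have e1 : ((n:ℤ)+1+2*j) - 1 = (n:ℤ)+2*j := by ring
    rw [e1] at hp
    rw [hp, pow_add]
    ring
  rw [Finset.sum_congr rfl step, Finset.sum_add_distrib]
  have hB : (∑ j ∈ Icc (-(n:ℤ)-3) ((n:ℤ)+3),
      C (sg j) * ((X:PowerSeries ℚ)^((Ee j).toNat) * gb 1 (2*n+1) ((n:ℤ)+1+2*j)))
      = ∑ j ∈ Icc (-(n:ℤ)-2) ((n:ℤ)+2),
      C (sg j) * ((X:PowerSeries ℚ)^((Ee j).toNat) * gb 1 (2*n+1) ((n:ℤ)+1+2*j)) := by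
    apply sum_window _ (by omega) (by omega)
    intro j hj
    rw [gb_out 1 (2*n+1) _ (by rw [cast2n1]; omega)]
    ring
  have hA : (∑ j ∈ Icc (-(n:ℤ)-3) ((n:ℤ)+3),
      C (sg j) * ((X:PowerSeries ℚ)^((Ee j).toNat + ((n:ℤ)+1-2*j).toNat)
        * gb 1 (2*n+1) ((n:ℤ)+2*j)))
      = X^(n+1) * ∑ j ∈ Icc (-(n:ℤ)-2) ((n:ℤ)+2),
          C (sg j) * ((X:PowerSeries ℚ)^((Fe j).toNat) * gb 1 (2*n+1) ((n:ℤ)+1+2*j)) := by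
    rw [sum_reflect]
    have hw3 : -((n:ℤ)+3) = -(n:ℤ)-3 := by ring
    have hw4 : -(-(n:ℤ)-3) = (n:ℤ)+3 := by ring
    rw [hw3, hw4]
    have step2 : ∀ j ∈ Icc (-(n:ℤ)-3) ((n:ℤ)+3),
        C (sg (-j)) * ((X:PowerSeries ℚ)^((Ee (-j)).toNat + ((n:ℤ)+1-2*(-j)).toNat)
          * gb 1 (2*n+1) ((n:ℤ)+2*(-j)))
        = X^(n+1) * (C (sg j) * ((X:PowerSeries ℚ)^((Fe j).toNat)
            * gb 1 (2*n+1) ((n:ℤ)+1+2*j))) := by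
      intro j hj
      rw [sg_neg]
      have hEn := Ee_neg j
      have hFd := Fe_def j
      have hE1 := Ee_nonneg j
      have hE2 := Ee_nonneg (-j)
      have hF1 := Fe_nonneg j
      by_cases hr : 0 ≤ (n:ℤ)+1+2*j ∧ (n:ℤ)+1+2*j ≤ 2*(n:ℤ)+1
      · have hgb : gb 1 (2*n+1) ((n:ℤ)+2*(-j)) = gb 1 (2*n+1) ((n:ℤ)+1+2*j) := by
          have := gb_symm 1 (2*n+1) ((n:ℤ)+1+2*j)
          rw [cast2n1] at this
          rw [show (n:ℤ)+2*(-j) = (2*(n:ℤ)+1) - ((n:ℤ)+1+2*j) by ring]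
          exact this
        have he : (Ee (-j)).toNat + ((n:ℤ)+1-2*(-j)).toNat = (n+1) + (Fe j).toNat := by
          omega
        rw [hgb, he, pow_add]
        ring
      · rw [gb_out 1 (2*n+1) ((n:ℤ)+2*(-j)) (by rw [cast2n1]; omega),
            gb_out 1 (2*n+1) ((n:ℤ)+1+2*j) (by rw [cast2n1]; omega)]
        ring
    rw [Finset.sum_congr rfl step2]
    rw [show (∑ j ∈ Icc (-(n:ℤ)-3) ((n:ℤ)+3), X^(n+1) * (C (sg j) *
        ((X:PowerSeries ℚ)^((Fe j).toNat) * gb 1 (2*n+1) ((n:ℤ)+1+2*j))))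
        = ∑ j ∈ Icc (-(n:ℤ)-2) ((n:ℤ)+2), X^(n+1) * (C (sg j) *
        ((X:PowerSeries ℚ)^((Fe j).toNat) * gb 1 (2*n+1) ((n:ℤ)+1+2*j))) from
      sum_window _ (by omega) (by omega) (fun j hj => by
        rw [gb_out 1 (2*n+1) _ (by rw [cast2n1]; omega)]; ring)]
    rw [Finset.mul_sum]
  rw [hA, hB]

lemma Vv_succ (n : ℕ) :
    Vv (n+1) = X^(n+1) * Tt (n+1) + Vv n - X^(n+1) * Vv n := by
  unfold Tt Vv
  simp only [Nat.cast_add, Nat.cast_one, show 2*(n+1) = 2*n+1+1 from by ring,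
    show 2*(n+1)+1 = 2*n+2+1 from by ring]
  have hw1 : (-((n:ℤ)+1)-2) = -(n:ℤ)-3 := by ring
  have hw2 : (((n:ℤ)+1)+2) = (n:ℤ)+3 := by ring
  rw [hw1, hw2]
  -- Pascal2 on V (n+1): top 2n+3 = (2n+2)+1, index n+2+2j
  have step : ∀ j ∈ Icc (-(n:ℤ)-3) ((n:ℤ)+3),
      C (sg j) * ((X:PowerSeries ℚ)^((Fe j).toNat) * gb 1 (2*n+2+1) ((n:ℤ)+1+1+2*j))
      = C (sg j) * ((X:PowerSeries ℚ)^((Fe j).toNat + ((n:ℤ)+1-2*j).toNat)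
            * gb 1 (2*n+2) ((n:ℤ)+1+2*j))
        + C (sg j) * ((X:PowerSeries ℚ)^((Fe j).toNat) * gb 1 (2*n+2) ((n:ℤ)+1+1+2*j)) := by
    intro j hj
    have hp := gb_pascal2 1 (2*n+2) ((n:ℤ)+1+1+2*j)
    have e0 : (((2*n+2:ℕ):ℤ)+1) - ((n:ℤ)+1+1+2*j) = (n:ℤ)+1-2*j := by
      rw [cast2n2]; ring
    rw [e0, one_mul] at hp
    have e1 : ((n:ℤ)+1+1+2*j) - 1 = (n:ℤ)+1+2*j := by ring
    rw [e1] at hp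
    rw [hp, pow_add]
    ring
  rw [Finset.sum_congr rfl step, Finset.sum_add_distrib]
  -- first piece is X^{n+1} * Tt (n+1)
  have hA : (∑ j ∈ Icc (-(n:ℤ)-3) ((n:ℤ)+3),
      C (sg j) * ((X:PowerSeries ℚ)^((Fe j).toNat + ((n:ℤ)+1-2*j).toNat)
        * gb 1 (2*n+2) ((n:ℤ)+1+2*j)))
      = X^(n+1) * ∑ j ∈ Icc (-(n:ℤ)-3) ((n:ℤ)+3),
          C (sg j) * ((X:PowerSeries ℚ)^((Ee j).toNat) * gb 1 (2*n+1+1) ((n:ℤ)+1+2*j)) := by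
    rw [sum_reflect]
    have hw3 : -((n:ℤ)+3) = -(n:ℤ)-3 := by ring
    have hw4 : -(-(n:ℤ)-3) = (n:ℤ)+3 := by ring
    rw [hw3, hw4, Finset.mul_sum]
    apply Finset.sum_congr rfl
    intro j hj
    rw [sg_neg]
    have hEn := Fe_neg j
    have hE1 := Ee_nonneg j
    have hF2 := Fe_nonneg (-j)
    have h2n : (2*n+2 : ℕ) = 2*n+1+1 := by ring
    rw [h2n]
    by_cases hr : 0 ≤ (n:ℤ)+1+2*j ∧ (n:ℤ)+1+2*j ≤ 2*(n:ℤ)+2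
    · have hgb : gb 1 (2*n+1+1) ((n:ℤ)+1+2*(-j)) = gb 1 (2*n+1+1) ((n:ℤ)+1+2*j) := by
        have := gb_symm 1 (2*n+1+1) ((n:ℤ)+1+2*j)
        rw [show ((2*n+1+1:ℕ):ℤ) = 2*(n:ℤ)+2 from by push_cast; ring] at this
        rw [show (n:ℤ)+1+2*(-j) = (2*(n:ℤ)+2) - ((n:ℤ)+1+2*j) by ring]
        exact this
      have he : (Fe (-j)).toNat + ((n:ℤ)+1-2*(-j)).toNat = (n+1) + (Ee j).toNat := by
        omega
      rw [hgb, he, pow_add]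
      ring
    · rw [gb_out 1 (2*n+1+1) ((n:ℤ)+1+2*(-j))
          (by rw [show ((2*n+1+1:ℕ):ℤ) = 2*(n:ℤ)+2 from by push_cast; ring]; omega),
          gb_out 1 (2*n+1+1) ((n:ℤ)+1+2*j)
          (by rw [show ((2*n+1+1:ℕ):ℤ) = 2*(n:ℤ)+2 from by push_cast; ring]; omega)]
      ring
  rw [hA]
  -- second piece Y = Vv n - X^{n+1} Vv n
  have hY : (∑ j ∈ Icc (-(n:ℤ)-3) ((n:ℤ)+3),
      C (sg j) * ((X:PowerSeries ℚ)^((Fe j).toNat) * gb 1 (2*n+2) ((n:ℤ)+1+1+2*j)))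
      = (∑ j ∈ Icc (-(n:ℤ)-2) ((n:ℤ)+2),
          C (sg j) * ((X:PowerSeries ℚ)^((Fe j).toNat) * gb 1 (2*n+1) ((n:ℤ)+1+2*j)))
        - X^(n+1) * ∑ j ∈ Icc (-(n:ℤ)-2) ((n:ℤ)+2),
          C (sg j) * ((X:PowerSeries ℚ)^((Fe j).toNat) * gb 1 (2*n+1) ((n:ℤ)+1+2*j)) := by
    have stepY : ∀ j ∈ Icc (-(n:ℤ)-3) ((n:ℤ)+3),
        C (sg j) * ((X:PowerSeries ℚ)^((Fe j).toNat) * gb 1 (2*n+2) ((n:ℤ)+1+1+2*j))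
        = C (sg j) * ((X:PowerSeries ℚ)^((Fe j).toNat) * gb 1 (2*n+1) ((n:ℤ)+1+2*j))
          + C (sg j) * ((X:PowerSeries ℚ)^((Fe j).toNat + ((n:ℤ)+1+1+2*j).toNat)
              * gb 1 (2*n+1) ((n:ℤ)+1+1+2*j)) := by
      intro j hj
      have h2n : (2*n+2 : ℕ) = (2*n+1)+1 := by ring
      rw [h2n]
      have hp := gb_pascal1 1 (2*n+1) ((n:ℤ)+1+1+2*j)
      have e1 : ((n:ℤ)+1+1+2*j) - 1 = (n:ℤ)+1+2*j := by ring
      rw [e1, one_mul] at hp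
      rw [hp, pow_add]
      ring
    rw [Finset.sum_congr rfl stepY, Finset.sum_add_distrib]
    have hV : (∑ j ∈ Icc (-(n:ℤ)-3) ((n:ℤ)+3),
        C (sg j) * ((X:PowerSeries ℚ)^((Fe j).toNat) * gb 1 (2*n+1) ((n:ℤ)+1+2*j)))
        = ∑ j ∈ Icc (-(n:ℤ)-2) ((n:ℤ)+2),
          C (sg j) * ((X:PowerSeries ℚ)^((Fe j).toNat) * gb 1 (2*n+1) ((n:ℤ)+1+2*j)) := by
      apply sum_window _ (by omega) (by omega)
      intro j hj
      rw [gb_out 1 (2*n+1) _ (by rw [cast2n1]; omega)]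
      ring
    have hR : (∑ j ∈ Icc (-(n:ℤ)-3) ((n:ℤ)+3),
        C (sg j) * ((X:PowerSeries ℚ)^((Fe j).toNat + ((n:ℤ)+1+1+2*j).toNat)
          * gb 1 (2*n+1) ((n:ℤ)+1+1+2*j)))
        = - (X^(n+1) * ∑ j ∈ Icc (-(n:ℤ)-2) ((n:ℤ)+2),
          C (sg j) * ((X:PowerSeries ℚ)^((Fe j).toNat) * gb 1 (2*n+1) ((n:ℤ)+1+2*j))) := by
      rw [show (∑ j ∈ Icc (-(n:ℤ)-3) ((n:ℤ)+3),
          C (sg j) * ((X:PowerSeries ℚ)^((Fe j).toNat + ((n:ℤ)+1+1+2*j).toNat)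
            * gb 1 (2*n+1) ((n:ℤ)+1+1+2*j)))
          = ∑ j ∈ Icc (-(n:ℤ)-3) ((n:ℤ)+2),
          C (sg j) * ((X:PowerSeries ℚ)^((Fe j).toNat + ((n:ℤ)+1+1+2*j).toNat)
            * gb 1 (2*n+1) ((n:ℤ)+1+1+2*j)) from
        sum_window _ (by omega) (by omega) (fun j hj => by
          rw [gb_out 1 (2*n+1) _ (by rw [cast2n1]; omega)]; ring)]
      -- reindex j ↦ -1-j : Icc(-n-3)(n+2) → itself
      rw [show (∑ j ∈ Icc (-(n:ℤ)-3) ((n:ℤ)+2),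
          C (sg j) * ((X:PowerSeries ℚ)^((Fe j).toNat + ((n:ℤ)+1+1+2*j).toNat)
            * gb 1 (2*n+1) ((n:ℤ)+1+1+2*j)))
          = ∑ j ∈ Icc (-(n:ℤ)-3) ((n:ℤ)+2),
          C (sg (-1-j)) * ((X:PowerSeries ℚ)^((Fe (-1-j)).toNat + ((n:ℤ)+1+1+2*(-1-j)).toNat)
            * gb 1 (2*n+1) ((n:ℤ)+1+1+2*(-1-j))) from by
        apply Finset.sum_nbij' (fun j => -1-j) (fun j => -1-j)
        · intro a ha; simp only [mem_Icc] at ha ⊢; omega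
        · intro a ha; simp only [mem_Icc] at ha ⊢; omega
        · intro a ha; omega
        · intro a ha; omega
        · intro a ha
          have h : (-1:ℤ)-(-1-a) = a := by ring
          rw [h]]
      have stepR : ∀ j ∈ Icc (-(n:ℤ)-3) ((n:ℤ)+2),
          C (sg (-1-j)) * ((X:PowerSeries ℚ)^((Fe (-1-j)).toNat + ((n:ℤ)+1+1+2*(-1-j)).toNat)
            * gb 1 (2*n+1) ((n:ℤ)+1+1+2*(-1-j)))
          = -(X^(n+1) * (C (sg j) * ((X:PowerSeries ℚ)^((Fe j).toNat)
              * gb 1 (2*n+1) ((n:ℤ)+1+2*j)))) := by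
        intro j hj
        rw [sg_neg_one_sub, map_neg]
        have hFn := Fe_neg_one_sub j
        have hFd := Fe_def j
        have hE1 := Ee_nonneg j
        have hF1 := Fe_nonneg j
        have hF2 := Fe_nonneg (-1-j)
        by_cases hr : 0 ≤ (n:ℤ)+1+2*j ∧ (n:ℤ)+1+2*j ≤ 2*(n:ℤ)+1
        · have hgb : gb 1 (2*n+1) ((n:ℤ)+1+1+2*(-1-j)) = gb 1 (2*n+1) ((n:ℤ)+1+2*j) := by
            have := gb_symm 1 (2*n+1) ((n:ℤ)+1+2*j)
            rw [cast2n1] at this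
            rw [show (n:ℤ)+1+1+2*(-1-j) = (2*(n:ℤ)+1) - ((n:ℤ)+1+2*j) by ring]
            exact this
          have he : (Fe (-1-j)).toNat + ((n:ℤ)+1+1+2*(-1-j)).toNat
              = (n+1) + (Fe j).toNat := by omega
          rw [hgb, he, pow_add]
          ring
        · rw [gb_out 1 (2*n+1) ((n:ℤ)+1+1+2*(-1-j)) (by rw [cast2n1]; omega),
              gb_out 1 (2*n+1) ((n:ℤ)+1+2*j) (by rw [cast2n1]; omega)]
          ring
      rw [Finset.sum_congr rfl stepR]
      rw [show (∑ j ∈ Icc (-(n:ℤ)-3) ((n:ℤ)+2),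
          -(X^(n+1) * (C (sg j) * ((X:PowerSeries ℚ)^((Fe j).toNat)
            * gb 1 (2*n+1) ((n:ℤ)+1+2*j)))))
          = ∑ j ∈ Icc (-(n:ℤ)-2) ((n:ℤ)+2),
          -(X^(n+1) * (C (sg j) * ((X:PowerSeries ℚ)^((Fe j).toNat)
            * gb 1 (2*n+1) ((n:ℤ)+1+2*j)))) from
        (sum_window _ (by omega) (by omega) (fun j hj => by
          rw [gb_out 1 (2*n+1) _ (by rw [cast2n1]; omega)]; ring)).symm.symm]
      rw [Finset.sum_neg_distrib, Finset.mul_sum]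
    rw [hV, hR]
    ring
  rw [hY]
  ring

lemma Tt_zero : Tt 0 = 1 := by
  unfold Tt
  rw [Finset.sum_eq_single_of_mem 0 (by simp)]
  · simp [sg, Ee_zero, gb_zero]
  · intro b _ hb0
    rw [gb_out 1 (2*0) _ (by simp; omega)]
    ring

lemma Vv_zero : Vv 0 = 1 := by
  unfold Vv
  rw [Finset.sum_eq_single_of_mem 0 (by simp)]
  · have h1 : gb 1 (2*0+1) (((0:ℕ):ℤ) + 1 + 2*0) = 1 := by
      have := gb_diag 1 1
      norm_num at this ⊢
      exact this
    norm_num at h1 ⊢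
    rw [h1]
    simp [sg, Fe_zero, Ee_zero]
  · intro b _ hb0
    rw [gb_out 1 (2*0+1) _ (by simp; omega)]
    ring

lemma Sq_eq_Tt (n : ℕ) : Sq 0 n = Tt n ∧ Sq 1 n = Vv n := by
  induction n with
  | zero => exact ⟨by rw [Sq_zero, Tt_zero], by rw [Sq_zero, Vv_zero]⟩
  | succ n ih =>
      obtain ⟨h0, h1⟩ := ih
      have hS : Sq 0 (n+1) = Tt (n+1) := by
        have ha := Sq_ascent 0 n
        norm_num at ha
        rw [ha, h0, h1, Tt_succ, ← Mm_eq_Tt n]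
        ring
      refine ⟨hS, ?_⟩
      have hr := Sq_rec2 n
      rw [hr, hS, h1, Vv_succ]

end Bosonic


section JTP

/-- `J_m = ∑_j (-1)^j q^{j(5j+1)/2} [2m, m-j]_{q⁵}`. -/
def Jj (m : ℕ) : PowerSeries ℚ :=
  ∑ j ∈ Icc (-(m:ℤ)-2) ((m:ℤ)+2),
    C (sg j) * ((X:PowerSeries ℚ)^((Ee j).toNat) * gb 5 (2*m) ((m:ℤ) - j))

/-- `L_m = ∑_j (-1)^j q^{j(5j+1)/2} [2m+1, m-j]_{q⁵}`. -/
def Ll (m : ℕ) : PowerSeries ℚ :=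
  ∑ j ∈ Icc (-(m:ℤ)-2) ((m:ℤ)+2),
    C (sg j) * ((X:PowerSeries ℚ)^((Ee j).toNat) * gb 5 (2*m+1) ((m:ℤ) - j))

lemma Jj_zero : Jj 0 = 1 := by
  unfold Jj
  rw [Finset.sum_eq_single_of_mem 0 (by simp)]
  · simp [sg, Ee_zero, gb_zero]
  · intro b _ hb0
    rw [gb_out 5 (2*0) _ (by simp; omega)]
    ring

lemma Ll_eq (m : ℕ) : Ll m = Jj m - X^(5*m+2) * Jj m := by
  unfold Ll Jj
  have step : ∀ j ∈ Icc (-(m:ℤ)-2) ((m:ℤ)+2),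
      C (sg j) * ((X:PowerSeries ℚ)^((Ee j).toNat) * gb 5 (2*m+1) ((m:ℤ) - j))
      = C (sg j) * ((X:PowerSeries ℚ)^((Ee j).toNat + 5*((m:ℤ)+1+j).toNat)
            * gb 5 (2*m) ((m:ℤ) - (j+1)))
        + C (sg j) * ((X:PowerSeries ℚ)^((Ee j).toNat) * gb 5 (2*m) ((m:ℤ) - j)) := by
    intro j hj
    have hp := gb_pascal2 5 (2*m) ((m:ℤ)-j)
    have e0 : (((2*m:ℕ):ℤ)+1) - ((m:ℤ)-j) = (m:ℤ)+1+j := by rw [cast2n]; ring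
    rw [e0] at hp
    have e1 : ((m:ℤ)-j) - 1 = (m:ℤ)-(j+1) := by ring
    rw [e1] at hp
    rw [hp, pow_add]
    ring
  rw [Finset.sum_congr rfl step, Finset.sum_add_distrib]
  have hres : (∑ j ∈ Icc (-(m:ℤ)-2) ((m:ℤ)+2),
      C (sg j) * ((X:PowerSeries ℚ)^((Ee j).toNat + 5*((m:ℤ)+1+j).toNat)
        * gb 5 (2*m) ((m:ℤ) - (j+1))))
      = - (X^(5*m+2) * ∑ j ∈ Icc (-(m:ℤ)-2) ((m:ℤ)+2),
        C (sg j) * ((X:PowerSeries ℚ)^((Ee j).toNat) * gb 5 (2*m) ((m:ℤ) - j))) := by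
    -- shrink to exact support, shift, expand
    rw [sum_window (a := -(m:ℤ)-1) (b := (m:ℤ)-1) _ (by omega) (by omega)
      (fun j hj => by
        rw [gb_out 5 (2*m) _ (by rw [cast2n]; omega)]; ring)]
    rw [sum_shift _ (-(m:ℤ)-1) ((m:ℤ)-1) 1]
    have hb1 : (-(m:ℤ)-1+1) = -(m:ℤ) := by ring
    have hb2 : ((m:ℤ)-1+1) = (m:ℤ) := by ring
    rw [hb1, hb2]
    have step2 : ∀ j ∈ Icc (-(m:ℤ)) ((m:ℤ)),
        C (sg (j-1)) * ((X:PowerSeries ℚ)^((Ee (j-1)).toNat + 5*((m:ℤ)+1+(j-1)).toNat)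
          * gb 5 (2*m) ((m:ℤ) - ((j-1)+1)))
        = -(X^(5*m+2) * (C (sg j) * ((X:PowerSeries ℚ)^((Ee j).toNat)
            * gb 5 (2*m) ((m:ℤ) - j)))) := by
      intro j hj
      simp only [mem_Icc] at hj
      rw [sg_sub_one, map_neg]
      have hEs := Ee_sub_one j
      have hE1 := Ee_nonneg j
      have hE2 := Ee_nonneg (j-1)
      have e2 : (m:ℤ) - ((j-1)+1) = (m:ℤ) - j := by ring
      rw [e2]
      have e3 : (m:ℤ)+1+(j-1) = (m:ℤ)+j := by ring
      rw [e3]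
      have he : (Ee (j-1)).toNat + 5*((m:ℤ)+j).toNat = (5*m+2) + (Ee j).toNat := by
        omega
      rw [he, pow_add]
      ring
    rw [Finset.sum_congr rfl step2]
    rw [show (∑ j ∈ Icc (-(m:ℤ)) ((m:ℤ)),
        -(X^(5*m+2) * (C (sg j) * ((X:PowerSeries ℚ)^((Ee j).toNat)
          * gb 5 (2*m) ((m:ℤ) - j)))))
        = ∑ j ∈ Icc (-(m:ℤ)-2) ((m:ℤ)+2),
        -(X^(5*m+2) * (C (sg j) * ((X:PowerSeries ℚ)^((Ee j).toNat)
          * gb 5 (2*m) ((m:ℤ) - j)))) from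
      (sum_window _ (by omega) (by omega) (fun j hj => by
        rw [gb_out 5 (2*m) _ (by rw [cast2n]; omega)]; ring)).symm]
    rw [Finset.sum_neg_distrib, Finset.mul_sum]
  rw [hres]
  ring

lemma Jj_succ (m : ℕ) : Jj (m+1) = Ll m - X^(5*m+3) * Ll m := by
  unfold Jj Ll
  simp only [Nat.cast_add, Nat.cast_one, show 2*(m+1) = 2*m+1+1 from by ring]
  have hw1 : (-((m:ℤ)+1)-2) = -(m:ℤ)-3 := by ring
  have hw2 : (((m:ℤ)+1)+2) = (m:ℤ)+3 := by ring
  rw [hw1, hw2]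
  have step : ∀ j ∈ Icc (-(m:ℤ)-3) ((m:ℤ)+3),
      C (sg j) * ((X:PowerSeries ℚ)^((Ee j).toNat) * gb 5 (2*m+1+1) ((m:ℤ)+1-j))
      = C (sg j) * ((X:PowerSeries ℚ)^((Ee j).toNat) * gb 5 (2*m+1) ((m:ℤ)-j))
        + C (sg j) * ((X:PowerSeries ℚ)^((Ee j).toNat + 5*((m:ℤ)+1-j).toNat)
            * gb 5 (2*m+1) ((m:ℤ)+1-j)) := by
    intro j hj
    have hp := gb_pascal1 5 (2*m+1) ((m:ℤ)+1-j)
    have e1 : ((m:ℤ)+1-j) - 1 = (m:ℤ)-j := by ring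
    rw [e1] at hp
    rw [hp, pow_add]
    ring
  rw [Finset.sum_congr rfl step, Finset.sum_add_distrib]
  have hL : (∑ j ∈ Icc (-(m:ℤ)-3) ((m:ℤ)+3),
      C (sg j) * ((X:PowerSeries ℚ)^((Ee j).toNat) * gb 5 (2*m+1) ((m:ℤ)-j)))
      = ∑ j ∈ Icc (-(m:ℤ)-2) ((m:ℤ)+2),
      C (sg j) * ((X:PowerSeries ℚ)^((Ee j).toNat) * gb 5 (2*m+1) ((m:ℤ)-j)) := by
    apply sum_window _ (by omega) (by omega)
    intro j hj
    rw [gb_out 5 (2*m+1) _ (by rw [cast2n1]; omega)]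
    ring
  have hres : (∑ j ∈ Icc (-(m:ℤ)-3) ((m:ℤ)+3),
      C (sg j) * ((X:PowerSeries ℚ)^((Ee j).toNat + 5*((m:ℤ)+1-j).toNat)
        * gb 5 (2*m+1) ((m:ℤ)+1-j)))
      = - (X^(5*m+3) * ∑ j ∈ Icc (-(m:ℤ)-2) ((m:ℤ)+2),
        C (sg j) * ((X:PowerSeries ℚ)^((Ee j).toNat) * gb 5 (2*m+1) ((m:ℤ)-j))) := by
    rw [sum_window (a := -(m:ℤ)) (b := (m:ℤ)+1) _ (by omega) (by omega)
      (fun j hj => by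
        rw [gb_out 5 (2*m+1) _ (by rw [cast2n1]; omega)]; ring)]
    rw [sum_shift _ (-(m:ℤ)) ((m:ℤ)+1) (-1)]
    have hb1 : (-(m:ℤ)+(-1)) = -(m:ℤ)-1 := by ring
    have hb2 : ((m:ℤ)+1+(-1)) = (m:ℤ) := by ring
    rw [hb1, hb2]
    have step2 : ∀ j ∈ Icc (-(m:ℤ)-1) ((m:ℤ)),
        C (sg (j-(-1))) * ((X:PowerSeries ℚ)^((Ee (j-(-1))).toNat + 5*((m:ℤ)+1-(j-(-1))).toNat)
          * gb 5 (2*m+1) ((m:ℤ)+1-(j-(-1))))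
        = -(X^(5*m+3) * (C (sg j) * ((X:PowerSeries ℚ)^((Ee j).toNat)
            * gb 5 (2*m+1) ((m:ℤ)-j)))) := by
      intro j hj
      simp only [mem_Icc] at hj
      have e4 : j - (-1) = j + 1 := by ring
      rw [e4, sg_add_one, map_neg]
      have hEs := Ee_add_one j
      have hE1 := Ee_nonneg j
      have hE2 := Ee_nonneg (j+1)
      have e2 : (m:ℤ)+1-(j+1) = (m:ℤ)-j := by ring
      rw [e2]
      have he : (Ee (j+1)).toNat + 5*((m:ℤ)-j).toNat = (5*m+3) + (Ee j).toNat := by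
        omega
      rw [he, pow_add]
      ring
    rw [Finset.sum_congr rfl step2]
    rw [show (∑ j ∈ Icc (-(m:ℤ)-1) ((m:ℤ)),
        -(X^(5*m+3) * (C (sg j) * ((X:PowerSeries ℚ)^((Ee j).toNat)
          * gb 5 (2*m+1) ((m:ℤ)-j)))))
        = ∑ j ∈ Icc (-(m:ℤ)-2) ((m:ℤ)+2),
        -(X^(5*m+3) * (C (sg j) * ((X:PowerSeries ℚ)^((Ee j).toNat)
          * gb 5 (2*m+1) ((m:ℤ)-j)))) from
      (sum_window _ (by omega) (by omega) (fun j hj => by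
        rw [gb_out 5 (2*m+1) _ (by rw [cast2n1]; omega)]; ring)).symm]
    rw [Finset.sum_neg_distrib, Finset.mul_sum]
  rw [hL, hres]
  ring

/-- partial product `∏_{k<m} (1 - X^{r+5k})`. -/
def Pf (r m : ℕ) : PowerSeries ℚ := ∏ k ∈ range m, (1 - (X:PowerSeries ℚ)^(r + 5*k))

lemma Jj_eq_prod (m : ℕ) : Jj m = Pf 2 m * Pf 3 m := by
  induction m with
  | zero => simp [Jj_zero, Pf]
  | succ m ih =>
      rw [Jj_succ, Ll_eq, ih]
      unfold Pf
      rw [prod_range_succ, prod_range_succ]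
      rw [show 2 + 5*m = 5*m+2 from by ring, show 3 + 5*m = 5*m+3 from by ring]
      ring

end JTP


section Limits

/-- congruence mod `X^{M+1}` -/
def Dv (M : ℕ) (f g : PowerSeries ℚ) : Prop := (X:PowerSeries ℚ)^(M+1) ∣ (f - g)

lemma Dv_refl (M : ℕ) (f : PowerSeries ℚ) : Dv M f f := by simp [Dv]

lemma Dv_symm {M f g} (h : Dv M f g) : Dv M g f := by
  rw [Dv, show g - f = -(f - g) by ring]; exact Dvd.dvd.neg_right h

lemma Dv_trans {M f g h} (h1 : Dv M f g) (h2 : Dv M g h) : Dv M f h := by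
  rw [Dv, show f - h = (f - g) + (g - h) by ring]; exact dvd_add h1 h2

lemma Dv_mul {M f g f' g'} (h1 : Dv M f g) (h2 : Dv M f' g') : Dv M (f * f') (g * g') := by
  rw [Dv, show f * f' - g * g' = (f - g) * f' + g * (f' - g') by ring]
  exact dvd_add (Dvd.dvd.mul_right h1 _) (Dvd.dvd.mul_left h2 _)

lemma Dv_sum {M : ℕ} {s : Finset ℤ} {f g : ℤ → PowerSeries ℚ}
    (h : ∀ j ∈ s, Dv M (f j) (g j)) :
    Dv M (∑ j ∈ s, f j) (∑ j ∈ s, g j) := by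
  rw [Dv, ← Finset.sum_sub_distrib]
  exact Finset.dvd_sum h

lemma Dv_coeff {M : ℕ} {f g : PowerSeries ℚ} (h : Dv M f g) {k : ℕ} (hk : k ≤ M) :
    coeff k f = coeff k g := by
  rw [Dv] at h
  rw [PowerSeries.X_pow_dvd_iff] at h
  have := h k (by omega)
  rw [map_sub] at this
  linarith

lemma Dv_of_coeff {M : ℕ} {f g : PowerSeries ℚ}
    (h : ∀ k, k ≤ M → coeff k f = coeff k g) : Dv M f g := by
  rw [Dv, PowerSeries.X_pow_dvd_iff]
  intro k hk
  rw [map_sub, h k (by omega)]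
  ring

lemma Dv_zero_of_dvd {M e : ℕ} (he : M + 1 ≤ e) (f : PowerSeries ℚ) :
    Dv M ((X:PowerSeries ℚ)^e * f) 0 := by
  rw [Dv, sub_zero]
  exact Dvd.dvd.mul_right (pow_dvd_pow _ he) f

lemma Dv_inv {M : ℕ} {f g : PowerSeries ℚ} (hf : constantCoeff f ≠ 0)
    (hg : constantCoeff g ≠ 0) (h : Dv M f g) : Dv M f⁻¹ g⁻¹ := by
  have hfi := PowerSeries.mul_inv_cancel f hf
  have hgi := PowerSeries.mul_inv_cancel g hg
  have key : f⁻¹ - g⁻¹ = f⁻¹ * g⁻¹ * (g - f) := by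
    linear_combination g⁻¹ * hfi - f⁻¹ * hgi
  rw [Dv, key]
  exact Dvd.dvd.mul_left (Dv_symm h) _

lemma constCoeff_pb (b m : ℕ) (hb : 1 ≤ b) : constantCoeff (pb b m) = 1 := by
  rw [pb, map_prod]
  rw [Finset.prod_congr rfl (fun k _ => ?_), Finset.prod_const_one]
  rw [map_sub, map_one, map_pow, PowerSeries.constantCoeff_X, zero_pow (by positivity), sub_zero]

lemma pb_dv (b : ℕ) (hb : 1 ≤ b) (M : ℕ) {m m' : ℕ} (h : M ≤ m) (h' : m ≤ m') :
    Dv M (pb b m') (pb b m) := by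
  induction m' with
  | zero => have : m = 0 := by omega
            rw [this]; exact Dv_refl _ _
  | succ m' ih =>
      rcases Nat.lt_or_ge m' m with hlt | hge
      · have : m = m' + 1 := by omega
        rw [this]; exact Dv_refl _ _
      · refine Dv_trans ?_ (ih hge)
        rw [pb_succ, Dv, show pb b m' * (1 - X^(b*(m'+1))) - pb b m'
          = -(X^(b*(m'+1)) * pb b m') by ring]
        refine Dvd.dvd.neg_right (Dvd.dvd.mul_right (pow_dvd_pow _ ?_) _)
        have : m' + 1 ≤ b * (m'+1) := by nlinarith
        omega

/-- main approximation: `[n, k] ≡ 1/(q^b;q^b)_k mod X^{M+1}` when `n - k ≥ M`. -/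
lemma gb_inv_approx (b : ℕ) (hb : 1 ≤ b) (M n k : ℕ) (hk : k ≤ n) (hnk : M ≤ n - k) :
    Dv M (gb b n (k:ℤ)) ((pb b k)⁻¹) := by
  set u := (pb b k)⁻¹ with hu_def
  set v := (pb b (n-k))⁻¹ with hv_def
  have hu := PowerSeries.mul_inv_cancel (pb b k) (by rw [constCoeff_pb b k hb]; norm_num)
  have hv := PowerSeries.mul_inv_cancel (pb b (n-k)) (by rw [constCoeff_pb b (n-k) hb]; norm_num)
  have hE := gb_mul_pb b n k hk
  have key : gb b n (k:ℤ) - u = u * v * (pb b n - pb b (n-k)) := by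
    have h2 : pb b n * u * v = gb b n (k:ℤ) := by
      rw [← hE]
      linear_combination (gb b n (k:ℤ) * pb b (n-k) * v) * hu
        + gb b n (k:ℤ) * hv
    linear_combination u * hv - h2
  rw [Dv, key]
  exact Dvd.dvd.mul_left (pb_dv b hb M hnk (by omega)) _

end Limits


section Approx

lemma Ee_ge_sq (j : ℤ) : j^2 ≤ Ee j := by
  have h := twoEe j
  have h2 : 0 ≤ j^2 + j := by
    rcases le_or_gt 0 j with h3 | h3
    · positivity
    · nlinarith
  nlinarith

lemma constCoeff_Pf (r m : ℕ) (hr : 1 ≤ r) : constantCoeff (Pf r m) = 1 := by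
  rw [Pf, map_prod]
  rw [Finset.prod_congr rfl (fun k _ => ?_), Finset.prod_const_one]
  rw [map_sub, map_one, map_pow, PowerSeries.constantCoeff_X, zero_pow (by positivity), sub_zero]

lemma Pf_dv (r : ℕ) (hr : 1 ≤ r) (M : ℕ) {m m' : ℕ} (h : M + 1 ≤ m) (h' : m ≤ m') :
    Dv M (Pf r m') (Pf r m) := by
  induction m' with
  | zero => have : m = 0 := by omega
            omega
  | succ m' ih =>
      rcases Nat.lt_or_ge m' m with hlt | hge
      · have : m = m' + 1 := by omega
        rw [this]; exact Dv_refl _ _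
      · refine Dv_trans ?_ (ih hge)
        rw [Pf, prod_range_succ, ← Pf, Dv, show Pf r m' * (1 - X^(r + 5*m')) - Pf r m'
          = -(X^(r + 5*m') * Pf r m') by ring]
        refine Dvd.dvd.neg_right (Dvd.dvd.mul_right (pow_dvd_pow _ (by omega)) _)

lemma pb5_eq_Pf5 (m : ℕ) : pb 5 m = Pf 5 m := by
  rw [pb, Pf]
  exact Finset.prod_congr rfl fun k _ => by rw [show 5*(k+1) = 5 + 5*k from by ring]

lemma pb1_eq_qPochFin (k : ℕ) : pb 1 k = qPochFin k := by
  rw [pb, qPochFin]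
  exact Finset.prod_congr rfl fun i _ => by rw [one_mul]

lemma pb1_split (t : ℕ) :
    pb 1 (5*t) = Pf 1 t * Pf 2 t * Pf 3 t * Pf 4 t * Pf 5 t := by
  induction t with
  | zero => simp [pb, Pf]
  | succ t ih =>
      have h5 : 5*(t+1) = (5*t)+1+1+1+1+1 := by ring
      rw [h5, pb_succ, pb_succ, pb_succ, pb_succ, pb_succ, ih]
      unfold Pf
      rw [prod_range_succ, prod_range_succ, prod_range_succ, prod_range_succ, prod_range_succ]
      rw [show 1*(5*t+1) = 1+5*t from by ring, show 1*(5*t+1+1) = 2+5*t from by ring,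
        show 1*(5*t+1+1+1) = 3+5*t from by ring, show 1*(5*t+1+1+1+1) = 4+5*t from by ring,
        show 1*(5*t+1+1+1+1+1) = 5+5*t from by ring]
      ring

lemma qPoch_dv (a M : ℕ) (ha : 1 ≤ a) :
    Dv M (qPochhammer ℚ a 5) (Pf a (M+1)) := by
  apply Dv_of_coeff
  intro k hk
  have h1 : coeff k (qPochhammer ℚ a 5) = coeff k (Pf a (k+1)) := by
    rw [qPochhammer, coeff_mk, Pf]
  rw [h1]
  exact (Dv_coeff (Pf_dv a ha k (by omega) (by omega)) (le_refl k)).symm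

lemma constCoeff_qPoch (a : ℕ) (ha : 1 ≤ a) :
    constantCoeff (qPochhammer ℚ a 5) = 1 := by
  have h := Dv_coeff (qPoch_dv a 0 ha) (le_refl 0)
  rw [← PowerSeries.coeff_zero_eq_constantCoeff_apply, h,
    PowerSeries.coeff_zero_eq_constantCoeff_apply, constCoeff_Pf a 1 ha]

/-- truncated theta sum -/
def Sg2 (a b : ℤ) : PowerSeries ℚ :=
  ∑ j ∈ Icc a b, C (sg j) * (X:PowerSeries ℚ)^((Ee j).toNat)

lemma Sg2_dv (M : ℕ) {a b : ℤ} (ha : a ≤ -(M:ℤ)) (hb : (M:ℤ) ≤ b) :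
    Dv M (Sg2 a b) (Sg2 (-(M:ℤ)) M) := by
  unfold Sg2
  rw [← Finset.sum_sdiff (Finset.Icc_subset_Icc ha hb), Dv, add_sub_cancel_right]
  apply Finset.dvd_sum
  intro j hj
  simp only [Finset.mem_sdiff, Finset.mem_Icc] at hj
  have hjM : (M:ℤ) < |j| := by
    rcases hj with ⟨h1, h2⟩
    rcases abs_cases j with ⟨h3, h4⟩ | ⟨h3, h4⟩ <;> omega
  have hEj : (M:ℤ) + 1 ≤ Ee j := by
    have h1 := Ee_ge_sq j
    nlinarith [abs_nonneg j, sq_abs j]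
  have := Ee_nonneg j
  exact Dvd.dvd.mul_left (pow_dvd_pow _ (by omega)) _

lemma Dv_kill {M e : ℕ} (he : M + 1 ≤ e) (c : ℚ) (f : PowerSeries ℚ) :
    Dv M (C c * ((X:PowerSeries ℚ)^e * f)) 0 := by
  rw [Dv, sub_zero, show C c * ((X:PowerSeries ℚ)^e * f) = X^e * (C c * f) by ring]
  exact Dvd.dvd.mul_right (pow_dvd_pow _ he) _

lemma pbinv_dv (b : ℕ) (hb : 1 ≤ b) (M : ℕ) {k l : ℕ} (hk : M ≤ k) (hl : M ≤ l) :
    Dv M ((pb b k)⁻¹) ((pb b l)⁻¹) := by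
  have h1 : Dv M (pb b k) (pb b l) :=
    Dv_trans (pb_dv b hb M (le_refl M) hk) (Dv_symm (pb_dv b hb M (le_refl M) hl))
  exact Dv_inv (by rw [constCoeff_pb b k hb]; norm_num)
    (by rw [constCoeff_pb b l hb]; norm_num) h1

end Approx


section MainApprox

lemma Tt_approx (M : ℕ) :
    Dv M (Tt (4*M+4))
      (Sg2 (-((4*M+4:ℕ):ℤ)-2) (((4*M+4:ℕ):ℤ)+2) * (pb 1 (5*(M+1)))⁻¹) := by
  unfold Tt Sg2
  rw [Finset.sum_mul]
  apply Dv_sum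
  intro j hj
  simp only [mem_Icc] at hj
  by_cases hEj : Ee j ≤ (M:ℤ)
  · have hj2 := Ee_ge_sq j
    have hjle : j ≤ (M:ℤ) := by nlinarith
    have hjge : -(M:ℤ) ≤ j := by nlinarith
    have hnn : 0 ≤ ((4*M+4:ℕ):ℤ) + 2*j := by push_cast; omega
    set k' := (((4*M+4:ℕ):ℤ) + 2*j).toNat with hk'
    have hcast : (((4*M+4:ℕ):ℤ) + 2*j) = (k' : ℤ) := by rw [hk']; omega
    rw [hcast]
    have hk'lb : M + 1 ≤ k' := by rw [hk']; push_cast; omega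
    have happrox : Dv M (gb 1 (2*(4*M+4)) (k' : ℤ)) ((pb 1 k')⁻¹) := by
      apply gb_inv_approx 1 (le_refl 1) M
      · rw [hk']; push_cast; omega
      · rw [hk']; push_cast; omega
    have hmid : Dv M ((pb 1 k')⁻¹) ((pb 1 (5*(M+1)))⁻¹) :=
      pbinv_dv 1 (le_refl 1) M (by omega) (by omega)
    have hfin := Dv_mul (Dv_refl M (C (sg j) * (X:PowerSeries ℚ)^((Ee j).toNat)))
      (Dv_trans happrox hmid)
    rw [mul_assoc] at hfin
    exact hfin
  · have he : M + 1 ≤ (Ee j).toNat := by have := Ee_nonneg j; omega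
    have h2 := Dv_kill he (sg j) ((pb 1 (5*(M+1)))⁻¹)
    rw [← mul_assoc] at h2
    exact Dv_trans (Dv_kill he _ _) (Dv_symm h2)

lemma Jj_approx (M : ℕ) :
    Dv M (Jj (2*M+2))
      (Sg2 (-((2*M+2:ℕ):ℤ)-2) (((2*M+2:ℕ):ℤ)+2) * (pb 5 (M+1))⁻¹) := by
  unfold Jj Sg2
  rw [Finset.sum_mul]
  apply Dv_sum
  intro j hj
  simp only [mem_Icc] at hj
  by_cases hEj : Ee j ≤ (M:ℤ)
  · have hj2 := Ee_ge_sq j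
    have hjle : j ≤ (M:ℤ) := by nlinarith
    have hjge : -(M:ℤ) ≤ j := by nlinarith
    have hnn : 0 ≤ ((2*M+2:ℕ):ℤ) - j := by push_cast; omega
    set k' := (((2*M+2:ℕ):ℤ) - j).toNat with hk'
    have hcast : (((2*M+2:ℕ):ℤ) - j) = (k' : ℤ) := by rw [hk']; omega
    rw [hcast]
    have happrox : Dv M (gb 5 (2*(2*M+2)) (k' : ℤ)) ((pb 5 k')⁻¹) := by
      apply gb_inv_approx 5 (by norm_num) M
      · rw [hk']; push_cast; omega
      · rw [hk']; push_cast; omega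
    have hmid : Dv M ((pb 5 k')⁻¹) ((pb 5 (M+1))⁻¹) :=
      pbinv_dv 5 (by norm_num) M (by rw [hk']; push_cast; omega) (by omega)
    have hfin := Dv_mul (Dv_refl M (C (sg j) * (X:PowerSeries ℚ)^((Ee j).toNat)))
      (Dv_trans happrox hmid)
    rw [mul_assoc] at hfin
    exact hfin
  · have he : M + 1 ≤ (Ee j).toNat := by have := Ee_nonneg j; omega
    have h2 := Dv_kill he (sg j) ((pb 5 (M+1))⁻¹)
    rw [← mul_assoc] at h2
    exact Dv_trans (Dv_kill he _ _) (Dv_symm h2)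

end MainApprox


lemma coeff_kill (M e : ℕ) (he : M+1 ≤ e) (f : PowerSeries ℚ) :
    coeff M ((X:PowerSeries ℚ)^e * f) = 0 := by
  have h := Dv_coeff (Dv_zero_of_dvd he f) (le_refl M)
  simpa using h

/-- The first Rogers–Ramanujan identity:
`∑_{n≥0} q^{n²}/(q;q)ₙ = 1/((q;q⁵)_∞ (q⁴;q⁵)_∞)` as formal power series. -/
theorem rogers_ramanujan_first :
    (PowerSeries.mk fun N => ∑ n ∈ Finset.range (N + 1),
        PowerSeries.coeff N ((X : PowerSeries ℚ) ^ (n ^ 2) * (qPochFin n)⁻¹)) =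
      (qPochhammer ℚ 1 5 * qPochhammer ℚ 4 5)⁻¹ := by
  ext M
  rw [coeff_mk]
  have hz1 : ∀ k, M < k → coeff M ((X:PowerSeries ℚ)^(k^2) * (qPochFin k)⁻¹) = 0 := by
    intro k hk
    exact coeff_kill M (k^2) (by nlinarith) _
  -- Step A : LHS = coeff M (Sq 0 (4M+4))
  have hA : (∑ k ∈ Finset.range (M+1),
        coeff M ((X:PowerSeries ℚ)^(k^2) * (qPochFin k)⁻¹))
      = coeff M (Sq 0 (4*M+4)) := by
    rw [show (∑ k ∈ Finset.range (M+1),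
          coeff M ((X:PowerSeries ℚ)^(k^2) * (qPochFin k)⁻¹))
        = ∑ k ∈ Finset.range (4*M+4+1),
          coeff M ((X:PowerSeries ℚ)^(k^2) * (qPochFin k)⁻¹) from
      Finset.sum_subset (Finset.range_subset_range.mpr (by omega))
        (fun k hk hk2 => hz1 k (by simp only [mem_range] at hk hk2; omega))]
    rw [Sq, map_sum]
    apply Finset.sum_congr rfl
    intro k hk
    simp only [mem_range] at hk
    by_cases hkM : k ≤ M
    · have happ : Dv M (gb 1 (4*M+4) (k:ℤ)) ((pb 1 k)⁻¹) :=
        gb_inv_approx 1 (le_refl 1) M (4*M+4) k (by omega) (by omega)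
      have h2 : Dv M ((X:PowerSeries ℚ)^(k^2) * (qPochFin k)⁻¹)
          ((X:PowerSeries ℚ)^(k*k+0*k) * gb 1 (4*M+4) (k:ℤ)) := by
        rw [← pb1_eq_qPochFin, show k*k+0*k = k^2 from by ring]
        exact Dv_mul (Dv_refl _ _) (Dv_symm happ)
      exact Dv_coeff h2 (le_refl M)
    · rw [hz1 k (by omega)]
      exact (coeff_kill M (k*k+0*k) (by nlinarith) _).symm
  rw [hA, (Sq_eq_Tt (4*M+4)).1]
  -- Step B : congruence chain to the RHS
  have hc1 : constantCoeff (Pf 1 (M+1)) = 1 := constCoeff_Pf _ _ (by norm_num)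
  have hc4 : constantCoeff (Pf 4 (M+1)) = 1 := constCoeff_Pf _ _ (by norm_num)
  have hcAll : constantCoeff (pb 1 (5*(M+1))) = 1 := constCoeff_pb _ _ (by norm_num)
  have hc14 : constantCoeff (Pf 1 (M+1) * Pf 4 (M+1)) = 1 := by
    rw [map_mul, hc1, hc4, mul_one]
  have hcpb5 : constantCoeff (pb 5 (M+1)) = 1 := constCoeff_pb _ _ (by norm_num)
  -- θ-sum congruences
  have hSgn : Dv M (Sg2 (-((4*M+4:ℕ):ℤ)-2) (((4*M+4:ℕ):ℤ)+2)) (Sg2 (-(M:ℤ)) (M:ℤ)) :=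
    Sg2_dv M (by push_cast; omega) (by push_cast; omega)
  have hSgm : Dv M (Sg2 (-((2*M+2:ℕ):ℤ)-2) (((2*M+2:ℕ):ℤ)+2)) (Sg2 (-(M:ℤ)) (M:ℤ)) :=
    Sg2_dv M (by push_cast; omega) (by push_cast; omega)
  -- from the JTP side : Sg2 (m-window) ≡ Jj m * pb 5 (M+1)
  have hcancel : Sg2 (-((2*M+2:ℕ):ℤ)-2) (((2*M+2:ℕ):ℤ)+2) * (pb 5 (M+1))⁻¹ * pb 5 (M+1)
      = Sg2 (-((2*M+2:ℕ):ℤ)-2) (((2*M+2:ℕ):ℤ)+2) := by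
    rw [mul_assoc, mul_comm ((pb 5 (M+1))⁻¹),
      PowerSeries.mul_inv_cancel _ (by rw [hcpb5]; norm_num), mul_one]
  have h5 : Dv M (Sg2 (-((2*M+2:ℕ):ℤ)-2) (((2*M+2:ℕ):ℤ)+2)) (Jj (2*M+2) * pb 5 (M+1)) := by
    have h := Dv_mul (Jj_approx M) (Dv_refl M (pb 5 (M+1)))
    rw [hcancel] at h
    exact Dv_symm h
  -- JTP product identity
  have h6 : Jj (2*M+2) * pb 5 (M+1)
      = Pf 2 (2*M+2) * Pf 3 (2*M+2) * Pf 5 (M+1) := by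
    rw [Jj_eq_prod, pb5_eq_Pf5]
  have h7 : Dv M (Pf 2 (2*M+2) * Pf 3 (2*M+2) * Pf 5 (M+1))
      (Pf 2 (M+1) * Pf 3 (M+1) * Pf 5 (M+1)) :=
    Dv_mul (Dv_mul (Pf_dv 2 (by norm_num) M (le_refl _) (by omega))
      (Pf_dv 3 (by norm_num) M (le_refl _) (by omega))) (Dv_refl _ _)
  -- overall : Tt (4M+4) ≡ (pb 1 (5(M+1)))⁻¹ * (P2 P3 P5)
  have hchain : Dv M (Tt (4*M+4))
      ((Pf 2 (M+1) * Pf 3 (M+1) * Pf 5 (M+1)) * (pb 1 (5*(M+1)))⁻¹) := by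
    refine Dv_trans (Tt_approx M) (Dv_mul ?_ (Dv_refl _ _))
    refine Dv_trans (Dv_trans hSgn (Dv_symm hSgm)) ?_
    refine Dv_trans h5 ?_
    rw [h6]
    exact h7
  -- exact algebraic identity for the product side
  have h9 : (Pf 2 (M+1) * Pf 3 (M+1) * Pf 5 (M+1)) * (pb 1 (5*(M+1)))⁻¹
      = (Pf 1 (M+1) * Pf 4 (M+1))⁻¹ := by
    have e1 : ((Pf 2 (M+1) * Pf 3 (M+1) * Pf 5 (M+1)) * (pb 1 (5*(M+1)))⁻¹)
        * (Pf 1 (M+1) * Pf 4 (M+1)) = 1 := by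
      have hsplit := pb1_split (M+1)
      have hci := PowerSeries.mul_inv_cancel _ (show constantCoeff (pb 1 (5*(M+1))) ≠ 0
        by rw [hcAll]; norm_num)
      calc ((Pf 2 (M+1) * Pf 3 (M+1) * Pf 5 (M+1)) * (pb 1 (5*(M+1)))⁻¹)
            * (Pf 1 (M+1) * Pf 4 (M+1))
          = (Pf 1 (M+1) * Pf 2 (M+1) * Pf 3 (M+1) * Pf 4 (M+1) * Pf 5 (M+1))
            * (pb 1 (5*(M+1)))⁻¹ := by ring
        _ = pb 1 (5*(M+1)) * (pb 1 (5*(M+1)))⁻¹ := by rw [← hsplit]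
        _ = 1 := hci
    have e2 : (Pf 1 (M+1) * Pf 4 (M+1))⁻¹ * (Pf 1 (M+1) * Pf 4 (M+1)) = 1 := by
      rw [mul_comm]
      exact PowerSeries.mul_inv_cancel _ (by rw [hc14]; norm_num)
    linear_combination (Pf 1 (M+1) * Pf 4 (M+1))⁻¹ * e1
      - ((Pf 2 (M+1) * Pf 3 (M+1) * Pf 5 (M+1)) * (pb 1 (5*(M+1)))⁻¹) * e2
  -- RHS congruence
  have h10 : Dv M ((Pf 1 (M+1) * Pf 4 (M+1))⁻¹)
      ((qPochhammer ℚ 1 5 * qPochhammer ℚ 4 5)⁻¹) := by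
    apply Dv_inv (by rw [hc14]; norm_num)
      (by rw [map_mul, constCoeff_qPoch 1 (by norm_num), constCoeff_qPoch 4 (by norm_num)]
          norm_num)
    exact Dv_symm (Dv_mul (qPoch_dv 1 M (by norm_num)) (qPoch_dv 4 M (by norm_num)))
  rw [h9] at hchain
  exact Dv_coeff (Dv_trans hchain h10) (le_refl M)

end RR
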